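/- Let a,b,c,a',b',c' > 0 with ab − c > 0 and a'b' − c' > 0, and define τ(R,S) = ((Rc − a'b)S + a'b' − c', R(S(ab−c) − ab') + c'). For (A,B) ∈ ℝ_{>0}², exactly one of the two points of τ⁻¹(A,B) lies in the region {(R,S) : R > a'/a, S > b'/b}. -/

import Mathlib

private lemma aux1 (a b c a' b' c' A B R S : ℝ)
    (h1 : (a*R - a')*(b*S - b') = A + B)
    (h2 : a'*(a*b - c)*(b*S - b') - c*b'*(a*R - a') =
        a*b*B - a*b*c' + a'*b'*c - (a*b - c)*(A + B)) :
    (a*b) * ((R*c - a'*b)*S + a'*b' - c') = (a*b)*A := by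
  linear_combination c*h1 - h2

private lemma aux2 (a b c a' b' c' A B R S : ℝ)
    (h1 : (a*R - a')*(b*S - b') = A + B)
    (h2 : a'*(a*b - c)*(b*S - b') - c*b'*(a*R - a') =
        a*b*B - a*b*c' + a'*b'*c - (a*b - c)*(A + B)) :
    (a*b) * (R*(S*(a*b - c) - a*b') + c') = (a*b)*B := by
  linear_combination (a*b - c)*h1 + h2

private lemma aux3 (a b c a' b' c' A B R S : ℝ)
    (e1 : (R*c - a'*b)*S + a'*b' - c' = A)
    (e2 : R*(S*(a*b - c) - a*b') + c' = B) :
    (a*R - a')*(b*S - b') = A + B := by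
  linear_combination e1 + e2

private lemma aux4 (a b c a' b' c' A B R S : ℝ)
    (e1 : (R*c - a'*b)*S + a'*b' - c' = A)
    (e2 : R*(S*(a*b - c) - a*b') + c' = B) :
    a'*(a*b - c)*(b*S - b') - c*b'*(a*R - a') =
        a*b*B - a*b*c' + a'*b'*c - (a*b - c)*(A + B) := by
  linear_combination (c - a*b)*e1 + c*e2

/-- Exactly one of the two points of `τ⁻¹(A,B)` lies in the region
`{(R,S) : R > a'/a, S > b'/b}`. -/
theorem stmt17 (a b c a' b' c' A B : ℝ)
    (ha : 0 < a) (hb : 0 < b) (hc : 0 < c) (habc : 0 < a * b - c)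
    (ha' : 0 < a') (hb' : 0 < b') (hc' : 0 < c') (habc' : 0 < a' * b' - c')
    (hA : 0 < A) (hB : 0 < B) :
    ∃! p : ℝ × ℝ,
      ((p.1 * c - a' * b) * p.2 + a' * b' - c',
        p.1 * (p.2 * (a * b - c) - a * b') + c') = (A, B) ∧
      a' / a < p.1 ∧ b' / b < p.2 := by
  have ha0 : a ≠ 0 := ne_of_gt ha
  have hb0 : b ≠ 0 := ne_of_gt hb
  have hab0 : a*b ≠ 0 := mul_ne_zero ha0 hb0
  obtain ⟨Q, hQdef⟩ : ∃ q : ℝ, q = A + B := ⟨_, rfl⟩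
  have hQ : 0 < Q := by rw [hQdef]; exact add_pos hA hB
  obtain ⟨al, hal_def⟩ : ∃ q : ℝ, q = a'*(a*b - c) := ⟨_, rfl⟩
  obtain ⟨be, hbe_def⟩ : ∃ q : ℝ, q = c*b' := ⟨_, rfl⟩
  have hal : 0 < al := by rw [hal_def]; exact mul_pos ha' habc
  have hbe : 0 < be := by rw [hbe_def]; exact mul_pos hc hb'
  have hbe0 : be ≠ 0 := ne_of_gt hbe
  obtain ⟨K, hKdef⟩ : ∃ q : ℝ, q = a*b*B - a*b*c' + a'*b'*c - (a*b - c)*Q := ⟨_, rfl⟩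
  have hD : 0 < K^2 + 4*al*be*Q := by positivity
  obtain ⟨s, hsdef⟩ : ∃ q : ℝ, q = Real.sqrt (K^2 + 4*al*be*Q) := ⟨_, rfl⟩
  have hs2 : s^2 = K^2 + 4*al*be*Q := by rw [hsdef]; exact Real.sq_sqrt hD.le
  have hsK : |K| < s := by
    have h1 : Real.sqrt (K^2) < Real.sqrt (K^2 + 4*al*be*Q) := by
      apply Real.sqrt_lt_sqrt (sq_nonneg K)
      nlinarith [mul_pos (mul_pos hal hbe) hQ]
    rw [Real.sqrt_sq_eq_abs] at h1
    rwa [hsdef]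
  have hKs : 0 < -K + s := by
    have := le_abs_self K
    linarith
  have hKs2 : 0 < K + s := by
    have := neg_abs_le K
    linarith
  obtain ⟨X, hXdef⟩ : ∃ q : ℝ, q = (-K + s)/(2*be) := ⟨_, rfl⟩
  have hX : 0 < X := by rw [hXdef]; exact div_pos hKs (by linarith)
  have hX0 : X ≠ 0 := ne_of_gt hX
  obtain ⟨Y, hYdef⟩ : ∃ q : ℝ, q = Q / X := ⟨_, rfl⟩
  have hY : 0 < Y := by rw [hYdef]; exact div_pos hQ hX
  have hXY : X * Y = Q := by
    rw [hYdef]; field_simp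
  have h2be : 2*be*X = -K + s := by
    rw [hXdef]; field_simp
  have hquad : be*X^2 + K*X - al*Q = 0 := by
    have hq4 : (4*be)*(be*X^2 + K*X - al*Q) = 0 := by
      linear_combination (2*be*X + K + s)*h2be + hs2
    exact (mul_eq_zero.mp hq4).resolve_left (by positivity)
  have hlin : al*Y - be*X = K := by
    have h : (al*Y - be*X)*X = K*X := by
      linear_combination al*hXY - hquad
    exact mul_right_cancel₀ hX0 h
  refine ⟨((a' + X)/a, (b' + Y)/b), ⟨?_, ?_, ?_⟩, ?_⟩
  · -- the equation
    have hR : a * ((a' + X)/a) - a' = X := by field_simp; ring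
    have hS : b * ((b' + Y)/b) - b' = Y := by field_simp; ring
    have h1 : (a*((a' + X)/a) - a')*(b*((b' + Y)/b) - b') = A + B := by
      rw [hR, hS, hXY, hQdef]
    have h2 : a'*(a*b - c)*(b*((b' + Y)/b) - b') - c*b'*(a*((a' + X)/a) - a') =
        a*b*B - a*b*c' + a'*b'*c - (a*b - c)*(A + B) := by
      rw [hR, hS, ← hal_def, ← hbe_def, ← hQdef, hlin, hKdef]
    have e1 := aux1 a b c a' b' c' A B ((a' + X)/a) ((b' + Y)/b) h1 h2
    have e2 := aux2 a b c a' b' c' A B ((a' + X)/a) ((b' + Y)/b) h1 h2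
    show ((((a' + X)/a) * c - a' * b) * ((b' + Y)/b) + a' * b' - c',
        ((a' + X)/a) * (((b' + Y)/b) * (a * b - c) - a * b') + c') = (A, B)
    simp only [Prod.mk.injEq]
    exact ⟨mul_left_cancel₀ hab0 e1, mul_left_cancel₀ hab0 e2⟩
  · show a' / a < (a' + X)/a
    rw [div_lt_div_iff₀ ha ha]
    nlinarith
  · show b' / b < (b' + Y)/b
    rw [div_lt_div_iff₀ hb hb]
    nlinarith
  · rintro ⟨R, S⟩ ⟨heq, hR1, hS1⟩
    simp only [Prod.mk.injEq] at heq
    obtain ⟨e1, e2⟩ := heq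
    have hx : 0 < a*R - a' := by
      have := (div_lt_iff₀ ha).mp hR1
      linarith
    have hy : 0 < b*S - b' := by
      have := (div_lt_iff₀ hb).mp hS1
      linarith
    have h1' : (a*R - a')*(b*S - b') = Q := by
      rw [hQdef]; exact aux3 a b c a' b' c' A B R S e1 e2
    have h2' : al*(b*S - b') - be*(a*R - a') = K := by
      rw [hal_def, hbe_def, hKdef, hQdef]
      exact aux4 a b c a' b' c' A B R S e1 e2
    obtain ⟨x, hxdef⟩ : ∃ q : ℝ, q = a*R - a' := ⟨_, rfl⟩
    obtain ⟨y, hydef⟩ : ∃ q : ℝ, q = b*S - b' := ⟨_, rfl⟩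
    rw [← hxdef] at hx h2'
    rw [← hydef] at hy h2'
    rw [← hxdef, ← hydef] at h1'
    have hquad' : be*x^2 + K*x - al*Q = 0 := by
      linear_combination (-x)*h2' + al*h1'
    have hfac : (x - X)*(be*(x + X) + K) = 0 := by
      linear_combination hquad' - hquad
    have hne : 0 < be*(x + X) + K := by
      have hbx : 0 < be * x := mul_pos hbe hx
      linarith [h2be]
    have hxX : x = X := by
      rcases mul_eq_zero.mp hfac with h | h
      · linarith
      · linarith
    have hyY : y = Y := by
      have hXy : X * y = X * Y := by
        rw [hXY, ← h1', hxX]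
      exact mul_left_cancel₀ hX0 hXy
    have hRfin : R = (a' + X)/a := by
      rw [eq_div_iff ha0]
      have h : a*R - a' = X := by rw [← hxdef, hxX]
      linarith
    have hSfin : S = (b' + Y)/b := by
      rw [eq_div_iff hb0]
      have h : b*S - b' = Y := by rw [← hydef, hyY]
      linarith
    simp only [Prod.mk.injEq]
    exact ⟨hRfin, hSfin⟩
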